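/- (Error representation with Galerkin orthogonality.) Let V be a real Hilbert space, let A : V → V and M : V → ℝ be continuously differentiable (of class C¹), let u, U ∈ V, set f = A(u) and R(U) = A(U) − f. Define Ā' = ∫₀¹ A'(s U + (1−s) u) ds, let ψ ∈ V satisfy ⟨v, ψ⟩ = (∫₀¹ M'(s U + (1−s) u) ds)(v) for all v ∈ V, and let φ ∈ V solve (Ā')* φ = ψ. Suppose in addition that V̂_h ⊆ V is a subspace with Galerkin orthogonality ⟨R(U), v⟩ = 0 for all v ∈ V̂_h, and let π_h φ be any element of V̂_h. Then M(U) − M(u) = ⟨R(U), φ − π_h φ⟩. -/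

import Mathlib

open RealInnerProductSpace

/-- Error representation with Galerkin orthogonality: under the hypotheses of the dual
error representation, if moreover `⟨R(U), v⟩ = 0` for all `v` in the subspace `V̂_h` and
`π_h φ ∈ V̂_h`, then `M(U) − M(u) = ⟨R(U), φ − π_h φ⟩`. -/
theorem stmt18 {V : Type*}
    [NormedAddCommGroup V] [InnerProductSpace ℝ V] [CompleteSpace V]
    (A : V → V) (M : V → ℝ) (hA : ContDiff ℝ 1 A) (hM : ContDiff ℝ 1 M)
    (u U : V) (f : V) (hf : f = A u)
    (Abar : V →L[ℝ] V)
    (hAbar : Abar = ∫ s in (0:ℝ)..1, fderiv ℝ A (s • U + (1 - s) • u))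
    (ψ : V)
    (hψ : ∀ v, ⟪v, ψ⟫ = (∫ s in (0:ℝ)..1, fderiv ℝ M (s • U + (1 - s) • u)) v)
    (φ : V) (hφ : ContinuousLinearMap.adjoint Abar φ = ψ)
    (Vh : Submodule ℝ V) (hGal : ∀ v ∈ Vh, ⟪A U - f, v⟫ = 0)
    (πφ : V) (hπφ : πφ ∈ Vh) :
    M U - M u = ⟪A U - f, φ - πφ⟫ := by
  set γ : ℝ → V := fun s => s • U + (1 - s) • u with hγdef
  have hγ : ∀ s : ℝ, HasDerivAt γ (U - u) s := by
    intro s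
    have h1 : HasDerivAt (fun s : ℝ => s • U) ((1:ℝ) • U) s :=
      (hasDerivAt_id s).smul_const U
    have h2 : HasDerivAt (fun s : ℝ => (1 - s) • u) (((0:ℝ)-1) • u) s :=
      ((hasDerivAt_const s (1:ℝ)).sub (hasDerivAt_id s)).smul_const u
    have := h1.add h2
    convert this using 1
    · rfl
    · module
  have hγcont : Continuous γ := by fun_prop
  -- FTC for A
  have hAderiv : ∀ t ∈ Set.uIcc (0:ℝ) 1,
      HasDerivAt (fun s => A (γ s)) (fderiv ℝ A (γ t) (U - u)) t := by
    intro t _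
    exact ((hA.differentiable one_ne_zero (γ t)).hasFDerivAt).comp_hasDerivAt t (hγ t)
  have hAcont : Continuous fun s => fderiv ℝ A (γ s) :=
    (hA.continuous_fderiv one_ne_zero).comp hγcont
  have hAint : IntervalIntegrable (fun s => fderiv ℝ A (γ s)) MeasureTheory.volume 0 1 :=
    hAcont.intervalIntegrable 0 1
  have hAint' : IntervalIntegrable (fun s => fderiv ℝ A (γ s) (U - u))
      MeasureTheory.volume 0 1 := by
    apply Continuous.intervalIntegrable
    exact (ContinuousLinearMap.apply ℝ V (U - u)).continuous.comp hAcont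
  have hAeq : A U - A u = Abar (U - u) := by
    rw [hAbar, ContinuousLinearMap.intervalIntegral_apply hAint]
    have := intervalIntegral.integral_eq_sub_of_hasDerivAt hAderiv hAint'
    rw [this]
    simp [hγdef]
  -- FTC for M
  have hMderiv : ∀ t ∈ Set.uIcc (0:ℝ) 1,
      HasDerivAt (fun s => M (γ s)) (fderiv ℝ M (γ t) (U - u)) t := by
    intro t _
    exact ((hM.differentiable one_ne_zero (γ t)).hasFDerivAt).comp_hasDerivAt t (hγ t)
  have hMcont : Continuous fun s => fderiv ℝ M (γ s) :=
    (hM.continuous_fderiv one_ne_zero).comp hγcont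
  have hMint : IntervalIntegrable (fun s => fderiv ℝ M (γ s)) MeasureTheory.volume 0 1 :=
    hMcont.intervalIntegrable 0 1
  have hMint' : IntervalIntegrable (fun s => fderiv ℝ M (γ s) (U - u))
      MeasureTheory.volume 0 1 := by
    apply Continuous.intervalIntegrable
    exact (ContinuousLinearMap.apply ℝ ℝ (U - u)).continuous.comp hMcont
  have hMeq : M U - M u = ⟪U - u, ψ⟫ := by
    rw [hψ, ContinuousLinearMap.intervalIntegral_apply hMint]
    have := intervalIntegral.integral_eq_sub_of_hasDerivAt hMderiv hMint'
    rw [this]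
    simp [hγdef]
  have hπ : ⟪A U - f, πφ⟫ = 0 := hGal _ hπφ
  have key : M U - M u = ⟪A U - f, φ⟫ := by
    rw [hf, hAeq, hMeq, ← hφ]
    exact ContinuousLinearMap.adjoint_inner_right Abar (U - u) φ
  rw [inner_sub_right, hπ, ← key]
  ring
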